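/- In the group G, the commutator (derived) subgroup [G,G] equals the cyclic subgroup generated by α⁴; in particular [G,G] is cyclic of order 10. -/

import Mathlib

section Aux

variable {G : Type*} [Group G]

lemma aux_isCyclic_zpowers (a : G) : IsCyclic (Subgroup.zpowers a) := by
  refine ⟨⟨a, Subgroup.mem_zpowers a⟩, fun x => ?_⟩
  obtain ⟨n, hn⟩ := x.2
  exact ⟨n, Subtype.ext (by simpa using hn)⟩

end Aux

open scoped commutatorElement

/-- In the group `G = ⟨α, β ∣ α⁴⁰ = β⁴ = 1, βαβ⁻¹ = α¹³⟩` of order 160,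
the commutator (derived) subgroup `[G,G]` equals the cyclic subgroup generated by `α⁴`;
in particular `[G,G]` is cyclic of order 10. -/
theorem commutator_eq_zpowers_alpha_pow_four
    (G : Type*) [Group G] (α β : G)
    (hgen : Subgroup.closure {α, β} = ⊤)
    (hα : α ^ 40 = 1) (hβ : β ^ 4 = 1)
    (hrel : β * α * β⁻¹ = α ^ 13)
    (hcard : Nat.card G = 160) :
    commutator G = Subgroup.zpowers (α ^ 4) ∧
      IsCyclic (commutator G) ∧ Nat.card (commutator G) = 10 := by
  haveI : Finite G := Nat.finite_of_card_ne_zero (by rw [hcard]; norm_num)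
  -- arithmetic of powers of α
  have hpow : ∀ m n : ℕ, 40 * n ≤ m → α ^ m = α ^ (m - 40 * n) := by
    intro m n hmn
    have h1 : α ^ (40 * n) = 1 := by rw [pow_mul, hα, one_pow]
    conv_lhs => rw [← Nat.sub_add_cancel hmn]
    rw [pow_add, h1, mul_one]
  -- conjugation formulas
  have hconj : ∀ n : ℕ, β * α ^ n * β⁻¹ = α ^ (13 * n) := by
    intro n
    rw [← conj_pow, hrel, ← pow_mul, mul_comm 13 n]
  have hrel' : β⁻¹ * α * β = α ^ 37 := by
    have h1 : β * α ^ 37 * β⁻¹ = α := by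
      rw [hconj 37]
      have := hpow (13 * 37) 12 (by norm_num)
      simpa using this
    calc β⁻¹ * α * β = β⁻¹ * (β * α ^ 37 * β⁻¹) * β := by rw [h1]
    _ = α ^ 37 := by group
  have hconj' : ∀ n : ℕ, β⁻¹ * α ^ n * β = α ^ (37 * n) := by
    intro n
    have h := (conj_pow (a := β⁻¹) (b := α) (i := n)).symm
    rw [inv_inv] at h
    rw [h, hrel', ← pow_mul, mul_comm 37 n]
  -- zpow versions for α^4
  have h13 : β * α ^ 4 * β⁻¹ = (α ^ 4) ^ (13 : ℤ) := by
    rw [show (13 : ℤ) = ((13 : ℕ) : ℤ) by norm_num, zpow_natCast, hconj 4, ← pow_mul]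
  have h37 : β⁻¹ * α ^ 4 * β = (α ^ 4) ^ (37 : ℤ) := by
    rw [show (37 : ℤ) = ((37 : ℕ) : ℤ) by norm_num, zpow_natCast, hconj' 4, ← pow_mul]
  have hconjz : ∀ n : ℤ, β * (α ^ 4) ^ n * β⁻¹ = (α ^ 4) ^ (13 * n) := by
    intro n
    rw [← conj_zpow (i := n) (a := β) (b := α ^ 4), h13, ← zpow_mul]
  have hconjz' : ∀ n : ℤ, β⁻¹ * (α ^ 4) ^ n * β = (α ^ 4) ^ (37 * n) := by
    intro n
    have h := (conj_zpow (i := n) (a := β⁻¹) (b := α ^ 4)).symm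
    rw [inv_inv] at h
    rw [h, h37, ← zpow_mul]
  -- M := zpowers (α ^ 4) is normal
  set M : Subgroup G := Subgroup.zpowers (α ^ 4) with hM
  have hMnormal : M.Normal := by
    rw [← Subgroup.normalizer_eq_top_iff, eq_top_iff, ← hgen, Subgroup.closure_le]
    have hmemα : α ∈ Subgroup.normalizer (M : Set G) := by
      have key : ∀ g : G, g ∈ M → α * g * α⁻¹ = g := by
        rintro g ⟨n, rfl⟩
        have hc : Commute α ((α ^ 4) ^ n) := ((Commute.refl α).pow_right 4).zpow_right n
        show α * (α ^ 4) ^ n * α⁻¹ = (α ^ 4) ^ n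
        rw [hc.eq]
        exact mul_inv_cancel_right _ _
      have key' : ∀ g : G, g ∈ M → α⁻¹ * g * α = g := by
        rintro g ⟨n, rfl⟩
        have hc : Commute α⁻¹ ((α ^ 4) ^ n) :=
          (((Commute.refl α).pow_right 4).zpow_right n).inv_left
        show α⁻¹ * (α ^ 4) ^ n * α = (α ^ 4) ^ n
        rw [hc.eq, mul_assoc]
        simp
      intro g
      constructor
      · intro hg; rw [key g hg]; exact hg
      · intro hg
        have h6 := key' _ hg
        have h7 : α⁻¹ * (α * g * α⁻¹) * α = g := by group
        rw [h7] at h6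
        rw [h6]
        exact hg
    have hmemβ : β ∈ Subgroup.normalizer (M : Set G) := by
      intro g
      constructor
      · rintro ⟨n, rfl⟩
        exact ⟨13 * n, (hconjz n).symm⟩
      · intro hg
        obtain ⟨n, hn⟩ := hg
        have h2 : β⁻¹ * (β * g * β⁻¹) * β = g := by group
        rw [← h2, ← hn]
        exact ⟨37 * n, (hconjz' n).symm⟩
    rintro x (rfl | rfl) <;> assumption
  -- the quotient by M is abelian
  set φ := QuotientGroup.mk' M with hφ
  have hφsurj : Function.Surjective φ := QuotientGroup.mk'_surjective M
  have himg : Subgroup.closure {φ α, φ β} = ⊤ := by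
    have h1 : ({φ α, φ β} : Set (G ⧸ M)) = φ '' {α, β} := by
      rw [Set.image_pair]
    rw [h1, ← MonoidHom.map_closure, hgen, ← MonoidHom.range_eq_map,
      MonoidHom.range_eq_top_of_surjective _ hφsurj]
  have hab : Commute (φ β) (φ α) := by
    rw [← commutatorElement_eq_one_iff_commute, ← map_commutatorElement,
      hφ, QuotientGroup.mk'_apply, QuotientGroup.eq_one_iff]
    have h1 : ⁅β, α⁆ = α ^ 12 := by
      rw [commutatorElement_def, hrel]; group
    have h2 : α ^ 12 = (α ^ 4) ^ 3 := by rw [← pow_mul]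
    rw [h1, h2]
    exact pow_mem (Subgroup.mem_zpowers _) 3
  have hcentral : ∀ x y : G ⧸ M, Commute x y := by
    have hc1 : ∀ x : G ⧸ M, Commute (φ α) x := by
      intro x
      have : Subgroup.centralizer {φ α} = ⊤ := by
        rw [eq_top_iff, ← himg, Subgroup.closure_le]
        rintro y (rfl | rfl)
        · intro h hh
          simp only [Set.mem_singleton_iff] at hh; subst hh; rfl
        · intro h hh
          simp only [Set.mem_singleton_iff] at hh; subst hh
          exact hab.symm.eq
      have hx : x ∈ Subgroup.centralizer {φ α} := this ▸ Subgroup.mem_top x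
      exact Subgroup.mem_centralizer_iff.1 hx (φ α) rfl
    have hc2 : ∀ x : G ⧸ M, Commute (φ β) x := by
      intro x
      have : Subgroup.centralizer {φ β} = ⊤ := by
        rw [eq_top_iff, ← himg, Subgroup.closure_le]
        rintro y (rfl | rfl)
        · intro h hh
          simp only [Set.mem_singleton_iff] at hh; subst hh
          exact hab.eq
        · intro h hh
          simp only [Set.mem_singleton_iff] at hh; subst hh; rfl
      have hx : x ∈ Subgroup.centralizer {φ β} := this ▸ Subgroup.mem_top x
      exact Subgroup.mem_centralizer_iff.1 hx (φ β) rfl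
    intro x y
    have : Subgroup.centralizer {x} = ⊤ := by
      rw [eq_top_iff, ← himg, Subgroup.closure_le]
      rintro z (rfl | rfl)
      · intro h hh
        simp only [Set.mem_singleton_iff] at hh; subst hh
        exact (hc1 h).symm.eq
      · intro h hh
        simp only [Set.mem_singleton_iff] at hh; subst hh
        exact (hc2 h).symm.eq
    have hy : y ∈ Subgroup.centralizer {x} := this ▸ Subgroup.mem_top y
    exact (Subgroup.mem_centralizer_iff.1 hy x rfl)
  have hcomm_le : commutator G ≤ M := by
    rw [commutator_def, Subgroup.commutator_le]
    intro g₁ _ g₂ _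
    have : φ ⁅g₁, g₂⁆ = 1 := by
      rw [map_commutatorElement, commutatorElement_eq_one_iff_commute]
      exact hcentral _ _
    rwa [hφ, QuotientGroup.mk'_apply, QuotientGroup.eq_one_iff] at this
  -- M ≤ commutator G
  have h12mem : α ^ 12 ∈ commutator G := by
    have h1 : ⁅β, α⁆ = α ^ 12 := by
      rw [commutatorElement_def, hrel]; group
    rw [commutator_def, ← h1]
    exact Subgroup.commutator_mem_commutator (Subgroup.mem_top β) (Subgroup.mem_top α)
  have h4mem : α ^ 4 ∈ commutator G := by
    have h1 : (α ^ 12) ^ 7 = α ^ 4 := by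
      rw [← pow_mul]
      have := hpow (12 * 7) 2 (by norm_num)
      simpa using this
    rw [← h1]
    exact pow_mem h12mem 7
  have hM_le : M ≤ commutator G := Subgroup.zpowers_le.2 h4mem
  have heq : commutator G = M := le_antisymm hcomm_le hM_le
  -- order of α is 40
  have hAnormal : (Subgroup.zpowers α).Normal := by
    rw [← Subgroup.normalizer_eq_top_iff, eq_top_iff, ← hgen, Subgroup.closure_le]
    have hmemα : α ∈ Subgroup.normalizer ((Subgroup.zpowers α : Subgroup G) : Set G) := Subgroup.le_normalizer
      (Subgroup.mem_zpowers α)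
    have hconjzA : ∀ n : ℤ, β * α ^ n * β⁻¹ = α ^ (13 * n) := by
      intro n
      have h1 : β * α * β⁻¹ = α ^ (13 : ℤ) := by
        rw [show (13 : ℤ) = ((13 : ℕ) : ℤ) by norm_num, zpow_natCast]; exact hrel
      rw [← conj_zpow (i := n) (a := β) (b := α), h1, ← zpow_mul]
    have hconjzA' : ∀ n : ℤ, β⁻¹ * α ^ n * β = α ^ (37 * n) := by
      intro n
      have h := (conj_zpow (i := n) (a := β⁻¹) (b := α)).symm
      rw [inv_inv] at h
      have h1 : β⁻¹ * α * β = α ^ (37 : ℤ) := by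
        rw [show (37 : ℤ) = ((37 : ℕ) : ℤ) by norm_num, zpow_natCast]; exact hrel'
      rw [h, h1, ← zpow_mul]
    have hmemβ : β ∈ Subgroup.normalizer ((Subgroup.zpowers α : Subgroup G) : Set G) := by
      intro g
      constructor
      · rintro ⟨n, rfl⟩
        exact ⟨13 * n, (hconjzA n).symm⟩
      · intro hg
        obtain ⟨n, hn⟩ := hg
        have h2 : β⁻¹ * (β * g * β⁻¹) * β = g := by group
        rw [← h2, ← hn]
        exact ⟨37 * n, (hconjzA' n).symm⟩
    rintro x (rfl | rfl) <;> assumption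
  have hcard_split : Nat.card G =
      Nat.card (G ⧸ Subgroup.zpowers α) * Nat.card (Subgroup.zpowers α) :=
    Subgroup.card_eq_card_quotient_mul_card_subgroup _
  set ψ := QuotientGroup.mk' (Subgroup.zpowers α) with hψ
  have hψsurj : Function.Surjective ψ := QuotientGroup.mk'_surjective _
  have hψα : ψ α = 1 := by
    rw [hψ, QuotientGroup.mk'_apply, QuotientGroup.eq_one_iff]
    exact Subgroup.mem_zpowers α
  have himgψ : Subgroup.zpowers (ψ β) = ⊤ := by
    have h1 : ({ψ α, ψ β} : Set (G ⧸ Subgroup.zpowers α)) = ψ '' {α, β} := by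
      rw [Set.image_pair]
    have h2 : Subgroup.closure {ψ α, ψ β} = ⊤ := by
      rw [h1, ← MonoidHom.map_closure, hgen, ← MonoidHom.range_eq_map,
        MonoidHom.range_eq_top_of_surjective _ hψsurj]
    rw [eq_top_iff, ← h2, Subgroup.closure_le]
    rintro x (rfl | rfl)
    · rw [hψα]; exact one_mem _
    · exact Subgroup.mem_zpowers _
  have hqcard : Nat.card (G ⧸ Subgroup.zpowers α) = orderOf (ψ β) := by
    rw [← Nat.card_zpowers, himgψ, Subgroup.card_top]
  have hqdvd : orderOf (ψ β) ∣ 4 :=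
    orderOf_dvd_of_pow_eq_one (by rw [← map_pow, hβ, map_one])
  have hadvd : orderOf α ∣ 40 := orderOf_dvd_of_pow_eq_one hα
  have hacard : Nat.card (Subgroup.zpowers α) = orderOf α := Nat.card_zpowers α
  have hα40 : orderOf α = 40 := by
    have hq4 : orderOf (ψ β) ≤ 4 := Nat.le_of_dvd (by norm_num) hqdvd
    have ha40 : orderOf α ≤ 40 := Nat.le_of_dvd (by norm_num) hadvd
    have h160 : 160 = orderOf (ψ β) * orderOf α := by
      rw [← hqcard, ← hacard, ← hcard_split, hcard]
    have : 160 ≤ 4 * orderOf α := by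
      rw [h160]
      exact Nat.mul_le_mul_right _ hq4
    omega
  have h10 : orderOf (α ^ 4) = 10 := by
    rw [orderOf_pow, hα40]
    norm_num
  refine ⟨heq, ?_, ?_⟩
  · rw [heq, hM]
    exact aux_isCyclic_zpowers _
  · rw [heq, hM, Nat.card_zpowers, h10]
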